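/- Define r̂_+^(ℓ) = 1 for all ℓ ≥ 1, and r̂_−^(1) = −1, r̂_−^(ℓ) = ρ(r̂_−^(ℓ−1))·(ℓ−2)/(ℓ−1) for ℓ ≥ 2. Then for every ℓ ≥ 1: √(u^(ℓ−1))·ρ(r̂_−^(ℓ)) + σ_b² ≤ K^(ℓ)(x,x') ≤ √(u^(ℓ−1))·ρ(r̂_+^(ℓ)) + σ_b² = √(u^(ℓ−1)) + σ_b², where u^(ℓ) = (‖x‖² + ℓσ_b²)·(‖x'‖² + ℓσ_b²). -/

import Mathlib

open Real

/-- The dual activation function of the scaled ReLU `φ(t) = √2·max(t,0)`. -/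
noncomputable def rho (r : ℝ) : ℝ :=
  (1 / π) * (Real.sqrt (1 - r ^ 2) + (π - Real.arccos r) * r)

/-- The dual activation function of the derivative of the scaled ReLU. -/
noncomputable def rhoPrime (r : ℝ) : ℝ := (π - Real.arccos r) / π

/-- The depth-`ℓ` NNGP kernel `K^(ℓ)` of a ReLU network with bias variance `σb²`,
defined recursively by `K^(0)(v,w) = ⟪v,w⟫` and
`K^(ℓ)(v,w) = √(K^(ℓ−1)(v,v)·K^(ℓ−1)(w,w))·ρ(K^(ℓ−1)(v,w)/√(K^(ℓ−1)(v,v)·K^(ℓ−1)(w,w))) + σb²`. -/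
noncomputable def Kker (σb : ℝ) {d : ℕ} :
    ℕ → EuclideanSpace ℝ (Fin d) → EuclideanSpace ℝ (Fin d) → ℝ
  | 0, v, w => (inner ℝ v w : ℝ)
  | ℓ + 1, v, w =>
      Real.sqrt (Kker σb ℓ v v * Kker σb ℓ w w) *
        rho (Kker σb ℓ v w / Real.sqrt (Kker σb ℓ v v * Kker σb ℓ w w)) + σb ^ 2

/-- `u^(ℓ) = (‖x‖² + ℓσ_b²)·(‖x'‖² + ℓσ_b²)`, stated for the norms `a = ‖x‖`, `b = ‖x'‖`. -/
noncomputable def uFun (σb a b : ℝ) (ℓ : ℕ) : ℝ :=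
  (a ^ 2 + ℓ * σb ^ 2) * (b ^ 2 + ℓ * σb ^ 2)

/-- `r̂_−^(1) = −1` and `r̂_−^(ℓ) = ρ(r̂_−^(ℓ−1))·(ℓ−2)/(ℓ−1)` for `ℓ ≥ 2`
(the value at `0` is junk). -/
noncomputable def rHatM : ℕ → ℝ
  | 0 => 0
  | 1 => -1
  | (n + 2) => rho (rHatM (n + 1)) * (n : ℝ) / ((n : ℝ) + 1)

lemma rho_one : rho 1 = 1 := by
  simp [rho, Real.arccos_one]

lemma rho_neg_one : rho (-1) = 0 := by
  simp [rho, Real.arccos_neg_one]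

lemma rho_hasDerivAt {r : ℝ} (h1 : -1 < r) (h2 : r < 1) :
    HasDerivAt rho ((π - Real.arccos r) / π) r := by
  have hne : (1 : ℝ) - r ^ 2 ≠ 0 := by nlinarith
  have hspos : 0 < Real.sqrt (1 - r ^ 2) := Real.sqrt_pos.2 (by nlinarith)
  have hin : HasDerivAt (fun x : ℝ => 1 - x ^ 2) (-(2 * r)) r := by
    simpa using ((hasDerivAt_pow 2 r).const_sub 1)
  have hs : HasDerivAt (fun x : ℝ => Real.sqrt (1 - x ^ 2))
      (-(2 * r) / (2 * Real.sqrt (1 - r ^ 2))) r :=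
    (Real.hasDerivAt_sqrt hne).comp r hin |>.congr_deriv (by ring)
  have ha : HasDerivAt Real.arccos (-(1 / Real.sqrt (1 - r ^ 2))) r :=
    Real.hasDerivAt_arccos h1.ne' h2.ne
  have hmul : HasDerivAt (fun x : ℝ => (π - Real.arccos x) * x)
      ((0 - -(1 / Real.sqrt (1 - r ^ 2))) * r + (π - Real.arccos r) * 1) r :=
    ((hasDerivAt_const r π).sub ha).mul (hasDerivAt_id r)
  have := ((hs.add hmul).const_mul (1 / π))
  exact this.congr_deriv (by field_simp; ring)

lemma rho_continuous : Continuous rho := by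
  unfold rho
  have h1 : Continuous fun r : ℝ => Real.sqrt (1 - r ^ 2) :=
    Real.continuous_sqrt.comp (by continuity)
  have h2 : Continuous fun r : ℝ => (π - Real.arccos r) * r :=
    ((continuous_const.sub Real.continuous_arccos).mul continuous_id)
  exact continuous_const.mul (h1.add h2)

lemma rho_monotoneOn : MonotoneOn rho (Set.Icc (-1 : ℝ) 1) := by
  apply monotoneOn_of_deriv_nonneg (convex_Icc _ _) rho_continuous.continuousOn
  · intro r hr
    rw [interior_Icc] at hr
    exact (rho_hasDerivAt hr.1 hr.2).differentiableAt.differentiableWithinAt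
  · intro r hr
    rw [interior_Icc] at hr
    rw [(rho_hasDerivAt hr.1 hr.2).deriv]
    exact div_nonneg (by linarith [Real.arccos_le_pi r]) Real.pi_pos.le

lemma rho_nonneg {r : ℝ} (hr : r ∈ Set.Icc (-1 : ℝ) 1) : 0 ≤ rho r := by
  have := rho_monotoneOn (Set.left_mem_Icc.2 (by norm_num)) hr hr.1
  rwa [rho_neg_one] at this

lemma rho_le_one {r : ℝ} (hr : r ∈ Set.Icc (-1 : ℝ) 1) : rho r ≤ 1 := by
  have := rho_monotoneOn hr (Set.right_mem_Icc.2 (by norm_num)) hr.2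
  rwa [rho_one] at this

lemma rHatM_mem : ∀ n : ℕ, rHatM (n + 1) ∈ Set.Icc (-1 : ℝ) 1 := by
  intro n
  induction n with
  | zero => simp [rHatM]
  | succ m ih =>
    show rho (rHatM (m + 1)) * (m : ℝ) / ((m : ℝ) + 1) ∈ Set.Icc (-1 : ℝ) 1
    have h0 : 0 ≤ rho (rHatM (m + 1)) := rho_nonneg ih
    have h1 : rho (rHatM (m + 1)) ≤ 1 := rho_le_one ih
    have hm : (0 : ℝ) ≤ m := Nat.cast_nonneg m
    constructor
    · have : 0 ≤ rho (rHatM (m + 1)) * (m : ℝ) / ((m : ℝ) + 1) :=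
        div_nonneg (mul_nonneg h0 hm) (by positivity)
      linarith
    · rw [div_le_one (by positivity)]
      nlinarith

lemma Kker_diag (σb : ℝ) (hσb : 0 ≤ σb) {d : ℕ} (v : EuclideanSpace ℝ (Fin d))
    (hv : v ≠ 0) : ∀ ℓ : ℕ, Kker σb ℓ v v = ‖v‖ ^ 2 + ℓ * σb ^ 2 := by
  have hv' : 0 < ‖v‖ := norm_pos_iff.2 hv
  intro ℓ
  induction ℓ with
  | zero =>
    show (inner ℝ v v : ℝ) = ‖v‖ ^ 2 + (0 : ℕ) * σb ^ 2
    rw [real_inner_self_eq_norm_sq]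
    simp
  | succ m ih =>
    have hA : 0 < ‖v‖ ^ 2 + m * σb ^ 2 := by positivity
    show Real.sqrt (Kker σb m v v * Kker σb m v v) *
        rho (Kker σb m v v / Real.sqrt (Kker σb m v v * Kker σb m v v)) + σb ^ 2 = _
    rw [ih, Real.sqrt_mul_self hA.le, div_self hA.ne', rho_one]
    push_cast
    ring

lemma sqrt_mul_add_le {A B s : ℝ} (hA : 0 ≤ A) (hB : 0 ≤ B) (hs : 0 ≤ s) :
    Real.sqrt (A * B) + s ≤ Real.sqrt ((A + s) * (B + s)) := by
  rw [Real.sqrt_mul hA B]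
  rw [Real.le_sqrt (by positivity) (by positivity)]
  have h2 : Real.sqrt A ^ 2 = A := Real.sq_sqrt hA
  have h3 : Real.sqrt B ^ 2 = B := Real.sq_sqrt hB
  nlinarith [sq_nonneg (Real.sqrt A - Real.sqrt B), Real.sqrt_nonneg A, Real.sqrt_nonneg B,
    sq_nonneg (Real.sqrt A * Real.sqrt B)]

lemma ratio_sqrt {a b s : ℝ} (ha : 0 ≤ a) (hb : 0 ≤ b) (hs : 0 ≤ s) (n : ℝ) (hn : 0 ≤ n) :
    n * Real.sqrt ((a + (n + 1) * s) * (b + (n + 1) * s)) ≤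
      (n + 1) * Real.sqrt ((a + n * s) * (b + n * s)) := by
  have h1 : n * (a + (n + 1) * s) ≤ (n + 1) * (a + n * s) := by nlinarith
  have h2 : n * (b + (n + 1) * s) ≤ (n + 1) * (b + n * s) := by nlinarith
  have key : n ^ 2 * ((a + (n + 1) * s) * (b + (n + 1) * s)) ≤
      (n + 1) ^ 2 * ((a + n * s) * (b + n * s)) := by
    have := mul_le_mul h1 h2 (by positivity) (by positivity)
    nlinarith [this]
  have hmain := Real.sqrt_le_sqrt key
  have e1 : Real.sqrt (n ^ 2 * ((a + (n + 1) * s) * (b + (n + 1) * s))) =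
      n * Real.sqrt ((a + (n + 1) * s) * (b + (n + 1) * s)) := by
    rw [Real.sqrt_mul (sq_nonneg n), Real.sqrt_sq hn]
  have e2 : Real.sqrt ((n + 1) ^ 2 * ((a + n * s) * (b + n * s))) =
      (n + 1) * Real.sqrt ((a + n * s) * (b + n * s)) := by
    rw [Real.sqrt_mul (sq_nonneg (n + 1)), Real.sqrt_sq (by positivity)]
  rw [e1, e2] at hmain
  exact hmain

lemma Kker_corr (σb : ℝ) (hσb : 0 ≤ σb) {d : ℕ}
    (x x' : EuclideanSpace ℝ (Fin d)) (hx : x ≠ 0) (hx' : x' ≠ 0) :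
    ∀ ℓ : ℕ,
      rHatM (ℓ + 1) * Real.sqrt (uFun σb ‖x‖ ‖x'‖ ℓ) ≤ Kker σb ℓ x x' ∧
      Kker σb ℓ x x' ≤ Real.sqrt (uFun σb ‖x‖ ‖x'‖ ℓ) := by
  have hxp : 0 < ‖x‖ := norm_pos_iff.2 hx
  have hxp' : 0 < ‖x'‖ := norm_pos_iff.2 hx'
  intro ℓ
  induction ℓ with
  | zero =>
    have hu : uFun σb ‖x‖ ‖x'‖ 0 = ‖x‖ ^ 2 * ‖x'‖ ^ 2 := by simp [uFun]
    have hsq : Real.sqrt (uFun σb ‖x‖ ‖x'‖ 0) = ‖x‖ * ‖x'‖ := by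
      rw [hu, Real.sqrt_mul (by positivity), Real.sqrt_sq hxp.le, Real.sqrt_sq hxp'.le]
    have hCS := abs_real_inner_le_norm x x'
    rw [abs_le] at hCS
    constructor
    · show (-1 : ℝ) * Real.sqrt (uFun σb ‖x‖ ‖x'‖ 0) ≤ (inner ℝ x x' : ℝ)
      rw [hsq]; linarith [hCS.1]
    · show (inner ℝ x x' : ℝ) ≤ _
      rw [hsq]; exact hCS.2
  | succ m ih =>
    obtain ⟨ihl, ihu⟩ := ih
    have hu : uFun σb ‖x‖ ‖x'‖ m = (‖x‖ ^ 2 + m * σb ^ 2) * (‖x'‖ ^ 2 + m * σb ^ 2) := rfl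
    have hupos : 0 < uFun σb ‖x‖ ‖x'‖ m := by rw [hu]; positivity
    have hS : 0 < Real.sqrt (uFun σb ‖x‖ ‖x'‖ m) := Real.sqrt_pos.2 hupos
    have hKeq : Kker σb (m + 1) x x' =
        Real.sqrt (uFun σb ‖x‖ ‖x'‖ m) *
          rho (Kker σb m x x' / Real.sqrt (uFun σb ‖x‖ ‖x'‖ m)) + σb ^ 2 := by
      show Real.sqrt (Kker σb m x x * Kker σb m x' x') *
          rho (Kker σb m x x' / Real.sqrt (Kker σb m x x * Kker σb m x' x')) + σb ^ 2 = _
      rw [Kker_diag σb hσb x hx m, Kker_diag σb hσb x' hx' m, ← hu]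
    set S := Real.sqrt (uFun σb ‖x‖ ‖x'‖ m) with hSdef
    set r := Kker σb m x x' / S with hrdef
    have hrmem : r ∈ Set.Icc (-1 : ℝ) 1 := by
      have hm1 : (-1 : ℝ) ≤ rHatM (m + 1) := (rHatM_mem m).1
      constructor
      · rw [hrdef, le_div_iff₀ hS]
        calc (-1 : ℝ) * S ≤ rHatM (m + 1) * S := by nlinarith
        _ ≤ Kker σb m x x' := ihl
      · rw [hrdef, div_le_one hS]; exact ihu
    have hrhat_le_r : rHatM (m + 1) ≤ r := by
      rw [hrdef, le_div_iff₀ hS]; exact ihl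
    have hrho_le : rho (rHatM (m + 1)) ≤ rho r :=
      rho_monotoneOn (rHatM_mem m) hrmem hrhat_le_r
    have hrho01 : 0 ≤ rho r := rho_nonneg hrmem
    have hrho1 : rho r ≤ 1 := rho_le_one hrmem
    have hrhoh0 : 0 ≤ rho (rHatM (m + 1)) := rho_nonneg (rHatM_mem m)
    have hstepS : S + σb ^ 2 ≤ Real.sqrt (uFun σb ‖x‖ ‖x'‖ (m + 1)) := by
      have h := sqrt_mul_add_le (show (0:ℝ) ≤ ‖x‖ ^ 2 + m * σb ^ 2 by positivity)
        (show (0:ℝ) ≤ ‖x'‖ ^ 2 + m * σb ^ 2 by positivity) (sq_nonneg σb)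
      have he1 : uFun σb ‖x‖ ‖x'‖ (m + 1) =
          (‖x‖ ^ 2 + (m : ℝ) * σb ^ 2 + σb ^ 2) * (‖x'‖ ^ 2 + (m : ℝ) * σb ^ 2 + σb ^ 2) := by
        simp only [uFun]; push_cast; ring
      rw [he1, hSdef, hu]
      exact h
    have hratio : (m : ℝ) * Real.sqrt (uFun σb ‖x‖ ‖x'‖ (m + 1)) ≤ ((m : ℝ) + 1) * S := by
      have h1 := ratio_sqrt (show (0:ℝ) ≤ ‖x‖ ^ 2 by positivity)
        (show (0:ℝ) ≤ ‖x'‖ ^ 2 by positivity) (sq_nonneg σb) (m : ℝ) (Nat.cast_nonneg m)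
      have he1 : uFun σb ‖x‖ ‖x'‖ (m + 1) =
          (‖x‖ ^ 2 + ((m : ℝ) + 1) * σb ^ 2) * (‖x'‖ ^ 2 + ((m : ℝ) + 1) * σb ^ 2) := by
        simp only [uFun]; push_cast; ring
      rw [he1, hSdef, hu]
      exact h1
    constructor
    · -- lower bound
      show rHatM (m + 1 + 1) * Real.sqrt (uFun σb ‖x‖ ‖x'‖ (m + 1)) ≤ _
      rw [hKeq]
      have hrhat2 : rHatM (m + 1 + 1) = rho (rHatM (m + 1)) * (m : ℝ) / ((m : ℝ) + 1) := rfl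
      have hmpos : (0 : ℝ) < (m : ℝ) + 1 := by positivity
      rw [hrhat2, div_mul_eq_mul_div, div_le_iff₀ hmpos]
      have t1 : rho (rHatM (m + 1)) * ((m : ℝ) * Real.sqrt (uFun σb ‖x‖ ‖x'‖ (m + 1))) ≤
          rho (rHatM (m + 1)) * (((m : ℝ) + 1) * S) :=
        mul_le_mul_of_nonneg_left hratio hrhoh0
      have t2 : rho (rHatM (m + 1)) * S ≤ rho r * S :=
        mul_le_mul_of_nonneg_right hrho_le hS.le
      have t3 : ((m : ℝ) + 1) * (rho (rHatM (m + 1)) * S) ≤ ((m : ℝ) + 1) * (rho r * S) :=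
        mul_le_mul_of_nonneg_left t2 hmpos.le
      have t4 : (0 : ℝ) ≤ σb ^ 2 * ((m : ℝ) + 1) := by positivity
      nlinarith [t1, t3, t4]
    · -- upper bound
      show Kker σb (m + 1) x x' ≤ _
      rw [hKeq]
      have t5 : S * rho r ≤ S * 1 := mul_le_mul_of_nonneg_left hrho1 hS.le
      calc S * rho r + σb ^ 2 ≤ S + σb ^ 2 := by linarith
        _ ≤ _ := hstepS

/-- Corollary A.11 ... -/
theorem Kker_bound_rHat (σb : ℝ) (hσb : 0 ≤ σb) {d : ℕ}
    (x x' : EuclideanSpace ℝ (Fin d)) (hx : x ≠ 0) (hx' : x' ≠ 0) :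
    ∀ ℓ : ℕ,
      Real.sqrt (uFun σb ‖x‖ ‖x'‖ ℓ) * rho (rHatM (ℓ + 1)) + σb ^ 2 ≤
          Kker σb (ℓ + 1) x x' ∧
      Kker σb (ℓ + 1) x x' ≤
          Real.sqrt (uFun σb ‖x‖ ‖x'‖ ℓ) * rho 1 + σb ^ 2 ∧
      Real.sqrt (uFun σb ‖x‖ ‖x'‖ ℓ) * rho 1 + σb ^ 2 =
          Real.sqrt (uFun σb ‖x‖ ‖x'‖ ℓ) + σb ^ 2 := by
  have hxp : 0 < ‖x‖ := norm_pos_iff.2 hx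
  have hxp' : 0 < ‖x'‖ := norm_pos_iff.2 hx'
  intro ℓ
  obtain ⟨hlow, hup⟩ := Kker_corr σb hσb x x' hx hx' ℓ
  have hS : 0 < Real.sqrt (uFun σb ‖x‖ ‖x'‖ ℓ) :=
    Real.sqrt_pos.2 (by unfold uFun; positivity)
  set S : ℝ := Real.sqrt (uFun σb ‖x‖ ‖x'‖ ℓ) with hSdef
  have hKeq : Kker σb (ℓ + 1) x x' = S * rho (Kker σb ℓ x x' / S) + σb ^ 2 := by
    show Real.sqrt (Kker σb ℓ x x * Kker σb ℓ x' x') *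
        rho (Kker σb ℓ x x' / Real.sqrt (Kker σb ℓ x x * Kker σb ℓ x' x')) + σb ^ 2 = _
    rw [Kker_diag σb hσb x hx ℓ, Kker_diag σb hσb x' hx' ℓ]
    rfl
  set r : ℝ := Kker σb ℓ x x' / S with hrdef
  have hrmem : r ∈ Set.Icc (-1 : ℝ) 1 := by
    have hm1 : (-1 : ℝ) ≤ rHatM (ℓ + 1) := (rHatM_mem ℓ).1
    constructor
    · rw [le_div_iff₀ hS]
      calc (-1 : ℝ) * S ≤ rHatM (ℓ + 1) * S := by nlinarith
      _ ≤ Kker σb ℓ x x' := hlow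
    · rw [div_le_one hS]; exact hup
  have hrhat_le_r : rHatM (ℓ + 1) ≤ r := by rw [le_div_iff₀ hS]; exact hlow
  have hrho_le : rho (rHatM (ℓ + 1)) ≤ rho r := rho_monotoneOn (rHatM_mem ℓ) hrmem hrhat_le_r
  have hrho1 : rho r ≤ 1 := rho_le_one hrmem
  refine ⟨?_, ?_, ?_⟩
  · rw [hKeq]
    have := mul_le_mul_of_nonneg_left hrho_le hS.le
    linarith
  · rw [hKeq, rho_one, mul_one]
    have := mul_le_mul_of_nonneg_left hrho1 hS.le
    linarith
  · rw [rho_one, mul_one]
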